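/- For every vector ψ ∈ H and every a ∈ {0,1}, setting aux := X̃^a ψ and letting ι_a(aux) ∈ H⊕H denote the vector |a⟩ ⊗ aux (i.e., ι₀(aux) = (aux, 0) and ι₁(aux) = (0, aux)), one has the exact identity ‖Vψ − ι_a(aux)‖² = (1/2)·‖(Z̃ − (−1)^a·1)ψ‖². -/

import Mathlib

/-- The projection `P⁰ = (1 + Z̃)/2`. -/
noncomputable def Pb0 {H : Type*} [AddCommGroup H] [Module ℂ H]
    (Zt : H →ₗ[ℂ] H) : H →ₗ[ℂ] H := ((1 : ℂ) / 2) • (1 + Zt)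

/-- The projection `P¹ = (1 − Z̃)/2`. -/
noncomputable def Pb1 {H : Type*} [AddCommGroup H] [Module ℂ H]
    (Zt : H →ₗ[ℂ] H) : H →ₗ[ℂ] H := ((1 : ℂ) / 2) • (1 - Zt)

/-- The SWAP-gate map `V : H → H⊕H`, `Vψ = (P⁰ψ, X̃P¹ψ)`. -/
noncomputable def VL {H : Type*} [AddCommGroup H] [Module ℂ H]
    (Zt Xt : H →ₗ[ℂ] H) : H →ₗ[ℂ] WithLp 2 (H × H) :=
  (WithLp.linearEquiv 2 ℂ (H × H)).symm.toLinearMap ∘ₗ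
    LinearMap.prod (Pb0 Zt) (Xt ∘ₗ Pb1 Zt)

/-- The inclusion `|0⟩ ⊗ w = (w, 0)` resp. `|1⟩ ⊗ w = (0, w)` of `H` into `H⊕H`. -/
noncomputable def iota {H : Type*} [AddCommGroup H] [Module ℂ H]
    (a : ℕ) (w : H) : WithLp 2 (H × H) :=
  (WithLp.equiv 2 (H × H)).symm (if a = 0 then (w, 0) else (0, w))

/-- For every `ψ ∈ H` and `a ∈ {0,1}`, with `aux := X̃^a ψ` one has the
exact identity `‖Vψ − |a⟩⊗aux‖² = (1/2)·‖(Z̃ − (−1)^a·1)ψ‖²`. -/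
theorem swap_isometry_state_extraction {H : Type*} [NormedAddCommGroup H]
    [InnerProductSpace ℂ H] [FiniteDimensional ℂ H]
    (Zt Xt : H →ₗ[ℂ] H) (hZt : Zt.IsSymmetric) (hZsq : Zt * Zt = 1)
    (hXt₁ : LinearMap.adjoint Xt * Xt = 1) (hXt₂ : Xt * LinearMap.adjoint Xt = 1)
    (ψ : H) (a : ℕ) (ha : a = 0 ∨ a = 1) :
    ‖VL Zt Xt ψ - iota a ((Xt ^ a) ψ)‖ ^ 2
      = (1 / 2) * ‖(Zt - ((-1 : ℂ)) ^ a • (1 : H →ₗ[ℂ] H)) ψ‖ ^ 2 := by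
  have hXnorm : ∀ v : H, ‖Xt v‖ = ‖v‖ := by
    intro v
    have h1 : LinearMap.adjoint Xt (Xt v) = v := by
      have := congrArg (fun f : H →ₗ[ℂ] H => f v) hXt₁
      simpa using this
    have h2 : (inner ℂ (Xt v) (Xt v) : ℂ) = inner ℂ v v := by
      rw [← LinearMap.adjoint_inner_left, h1]
    rw [norm_eq_sqrt_re_inner (𝕜 := ℂ), norm_eq_sqrt_re_inner (𝕜 := ℂ) v, h2]
  rcases ha with rfl | rfl
  · rw [WithLp.prod_norm_sq_eq_of_L2]
    have hfst : (VL Zt Xt ψ - iota 0 ((Xt ^ 0) ψ)).fst = ((1 : ℂ)/2) • (Zt ψ - ψ) := by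
      show Pb0 Zt ψ - ψ = _
      simp only [Pb0, LinearMap.smul_apply, LinearMap.add_apply, Module.End.one_apply]
      module
    have hsnd : (VL Zt Xt ψ - iota 0 ((Xt ^ 0) ψ)).snd = Xt (((1 : ℂ)/2) • (ψ - Zt ψ)) := by
      show Xt (Pb1 Zt ψ) - 0 = _
      simp only [Pb1, LinearMap.smul_apply, LinearMap.sub_apply, Module.End.one_apply, sub_zero]
    have hrhs : (Zt - ((-1 : ℂ)) ^ 0 • (1 : H →ₗ[ℂ] H)) ψ = Zt ψ - ψ := by
      simp
    rw [hfst, hsnd, hXnorm, hrhs, norm_smul, norm_smul]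
    have : ‖ψ - Zt ψ‖ = ‖Zt ψ - ψ‖ := by rw [norm_sub_rev]
    rw [this]
    simp [norm_div]
    ring
  · rw [WithLp.prod_norm_sq_eq_of_L2]
    have hfst : (VL Zt Xt ψ - iota 1 ((Xt ^ 1) ψ)).fst = ((1 : ℂ)/2) • (Zt ψ + ψ) := by
      show Pb0 Zt ψ - 0 = _
      simp only [Pb0, LinearMap.smul_apply, LinearMap.add_apply, Module.End.one_apply, sub_zero]
      module
    have hsnd : (VL Zt Xt ψ - iota 1 ((Xt ^ 1) ψ)).snd
        = Xt (-(((1 : ℂ)/2) • (Zt ψ + ψ))) := by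
      show Xt (Pb1 Zt ψ) - Xt ψ = _
      rw [← map_sub]
      congr 1
      simp only [Pb1, LinearMap.smul_apply, LinearMap.sub_apply, Module.End.one_apply]
      module
    have hrhs : (Zt - ((-1 : ℂ)) ^ 1 • (1 : H →ₗ[ℂ] H)) ψ = Zt ψ + ψ := by
      simp [sub_neg_eq_add]
    rw [hfst, hsnd, hXnorm, hrhs, norm_neg, norm_smul]
    simp [norm_div]
    ring
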